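/- Let F be a field, N ≥ 1, and let k, n be natural numbers with 1 ≤ k < n. Then dim_F S^n − dim_F (S^n ∩ 𝔪^{k+1}) = C(k + N, N), where 𝔪 = (X_1, …, X_N) ⊆ F[X_0, …, X_N] and C denotes the binomial coefficient. Equivalently, the quotient vector space S^n / (S^n ∩ 𝔪^{k+1}) has F-dimension C(k + N, N). -/

import Mathlib

open MvPolynomial

/-- The ideal `𝔪 = (X 1, …, X N)` generated by the variables `X i` with `i ≠ 0`. -/
noncomputable def mIdeal (F : Type*) [CommSemiring F] (N : ℕ) :
    Ideal (MvPolynomial (Fin (N + 1)) F) :=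
  Ideal.span {p | ∃ i : Fin (N + 1), i ≠ 0 ∧ p = X i}

namespace Stmt9Aux

/-- Weight of a multidegree, ignoring the variable `0`. -/
noncomputable def wt {N : ℕ} (d : Fin (N + 1) →₀ ℕ) : ℕ := (d.erase 0).degree

lemma degree_add {N : ℕ} (a b : Fin (N + 1) →₀ ℕ) :
    (a + b).degree = a.degree + b.degree := by
  simp only [Finsupp.degree_eq_weight_one]
  exact map_add _ a b

lemma degree_single {N : ℕ} (i : Fin (N + 1)) (m : ℕ) :
    (Finsupp.single i m).degree = m := by
  simp [Finsupp.degree_eq_weight_one, Finsupp.weight_apply, Finsupp.sum_single_index]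

lemma wt_add {N : ℕ} (a b : Fin (N + 1) →₀ ℕ) : wt (a + b) = wt a + wt b := by
  rw [wt, wt, wt, Finsupp.erase_add, degree_add]

lemma wt_single {N : ℕ} (i : Fin (N + 1)) (hi : i ≠ 0) (m : ℕ) :
    wt (Finsupp.single i m) = m := by
  rw [wt]
  have h : (Finsupp.single i m).erase 0 = Finsupp.single i m := by
    ext j
    by_cases hj : j = 0
    · subst hj
      rw [Finsupp.erase_same, Finsupp.single_apply]
      rw [if_neg (by exact fun h0 => hi h0)]
    · rw [Finsupp.erase_ne hj]
  rw [h, degree_single]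

lemma degree_eq {N : ℕ} (d : Fin (N + 1) →₀ ℕ) : d.degree = d 0 + wt d := by
  conv_lhs => rw [← Finsupp.single_add_erase 0 d]
  rw [degree_add, degree_single, wt]

lemma wt_le_degree {N : ℕ} (d : Fin (N + 1) →₀ ℕ) : wt d ≤ d.degree := by
  rw [degree_eq]; omega

lemma wt_update {N : ℕ} (d : Fin (N + 1) →₀ ℕ) (b : ℕ) :
    wt (d.update 0 b) = wt d := by
  unfold wt
  congr 1
  ext i
  by_cases hi : i = 0
  · simp [hi, Finsupp.erase_same]
  · classical simp [Finsupp.erase_ne hi, Finsupp.coe_update, Function.update, hi]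

lemma degree_update {N : ℕ} (d : Fin (N + 1) →₀ ℕ) (b : ℕ) :
    (d.update 0 b).degree = b + wt d := by
  rw [degree_eq, wt_update]
  classical simp [Finsupp.coe_update, Function.update]

section Ideal

variable {F : Type*} [Field F] {N : ℕ}

lemma X_mem_mIdeal {i : Fin (N + 1)} (hi : i ≠ 0) :
    (X i : MvPolynomial (Fin (N + 1)) F) ∈ mIdeal F N :=
  Ideal.subset_span ⟨i, hi, rfl⟩

lemma one_le_wt_of_mem {p : MvPolynomial (Fin (N + 1)) F} (hp : p ∈ mIdeal F N) :
    ∀ d ∈ p.support, 1 ≤ wt d := by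
  classical
  refine Submodule.span_induction ?_ ?_ ?_ ?_ hp
  · rintro x ⟨i, hi, rfl⟩ d hd
    rw [MvPolynomial.support_X] at hd
    simp only [Finset.mem_singleton] at hd
    subst hd
    rw [wt_single i hi]
  · intro d hd
    simp at hd
  · intro x y hx hy ihx ihy d hd
    rcases Finset.mem_union.mp (MvPolynomial.support_add hd) with h | h
    · exact ihx d h
    · exact ihy d h
  · intro a x hx ih d hd
    rw [smul_eq_mul] at hd
    have hd' := MvPolynomial.support_mul a x hd
    rw [Finset.mem_add] at hd'
    obtain ⟨u, hu, v, hv, rfl⟩ := hd'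
    have := ih v hv
    rw [wt_add]
    omega

lemma le_wt_of_mem_pow {m : ℕ} {p : MvPolynomial (Fin (N + 1)) F}
    (hp : p ∈ (mIdeal F N) ^ m) : ∀ d ∈ p.support, m ≤ wt d := by
  classical
  induction m generalizing p with
  | zero => intro d _; exact Nat.zero_le _
  | succ m ih =>
    rw [pow_succ] at hp
    refine Submodule.mul_induction_on hp ?_ ?_
    · intro r hr s hs d hd
      have hd' := MvPolynomial.support_mul r s hd
      rw [Finset.mem_add] at hd'
      obtain ⟨u, hu, v, hv, rfl⟩ := hd'
      have h1 := ih hr u hu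
      have h2 := one_le_wt_of_mem hs v hv
      rw [wt_add]
      omega
    · intro x y ihx ihy d hd
      rcases Finset.mem_union.mp (MvPolynomial.support_add hd) with h | h
      · exact ihx d h
      · exact ihy d h

lemma monomial_mem_pow (m : ℕ) (d : Fin (N + 1) →₀ ℕ) (r : F) (h : m ≤ wt d) :
    monomial d r ∈ (mIdeal F N) ^ m := by
  induction m generalizing d with
  | zero => simp
  | succ m ih =>
    have hne : d.erase 0 ≠ 0 := by
      intro h0
      rw [wt, h0, map_zero] at h
      omega
    obtain ⟨i, hi⟩ : ∃ i, d.erase 0 i ≠ 0 := by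
      by_contra hc
      push_neg at hc
      exact hne (Finsupp.ext hc)
    have hi0 : i ≠ 0 := by
      intro h'
      rw [h', Finsupp.erase_same] at hi
      exact hi rfl
    rw [Finsupp.erase_ne hi0] at hi
    have hle : Finsupp.single i 1 ≤ d := by
      rw [Finsupp.single_le_iff]
      omega
    have hde : d = (d - Finsupp.single i 1) + Finsupp.single i 1 :=
      (tsub_add_cancel_of_le hle).symm
    have hwt : wt d = wt (d - Finsupp.single i 1) + 1 := by
      conv_lhs => rw [hde]
      rw [wt_add, wt_single i hi0]
    have hmon : (monomial d r : MvPolynomial (Fin (N + 1)) F)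
        = monomial (d - Finsupp.single i 1) r * X i := by
      rw [MvPolynomial.X, MvPolynomial.monomial_mul, mul_one, ← hde]
    rw [hmon, pow_succ]
    exact Ideal.mul_mem_mul (ih _ (by omega)) (X_mem_mIdeal hi0)

lemma mem_pow_iff {m : ℕ} {p : MvPolynomial (Fin (N + 1)) F} :
    p ∈ (mIdeal F N) ^ m ↔ ∀ d ∈ p.support, m ≤ wt d := by
  refine ⟨le_wt_of_mem_pow, fun h => ?_⟩
  rw [p.as_sum]
  exact Submodule.sum_mem _ fun d hd => monomial_mem_pow m d _ (h d hd)

end Ideal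

section Count

lemma degree_eq_sum_id {N : ℕ} (f : Fin (N + 1) →₀ ℕ) :
    f.sum (fun _ => id) = f.degree := rfl

/-- Bijection between degree-`n` multidegrees of small weight and degree-`k` multidegrees. -/
noncomputable def equivUpdate {N n k : ℕ} (hkn : k ≤ n) :
    {d : Fin (N + 1) →₀ ℕ // d.degree = n ∧ wt d ≤ k} ≃
      {c : Fin (N + 1) →₀ ℕ // c.degree = k} where
  toFun d := ⟨d.1.update 0 (k - wt d.1), by
    rw [degree_update]
    have := d.2.2
    omega⟩
  invFun c := ⟨c.1.update 0 (n - wt c.1), by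
    have h1 : wt c.1 ≤ k := le_of_le_of_eq (wt_le_degree c.1) c.2
    refine ⟨?_, ?_⟩
    · rw [degree_update]
      omega
    · rw [wt_update]
      exact h1⟩
  left_inv d := by
    obtain ⟨d, hd1, hd2⟩ := d
    have h := degree_eq d
    apply Subtype.ext
    simp only [wt_update, Finsupp.update_idem]
    have h2 : n - wt d = d 0 := by omega
    rw [h2, Finsupp.update_self]
  right_inv c := by
    obtain ⟨c, hc⟩ := c
    have h1 : wt c ≤ k := hc ▸ wt_le_degree c
    have h := degree_eq c
    apply Subtype.ext
    simp only [wt_update, Finsupp.update_idem]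
    have h2 : k - wt c = c 0 := by omega
    rw [h2, Finsupp.update_self]

/-- Degree-`k` multidegrees biject with multisets of size `k`. -/
noncomputable def equivSym (N k : ℕ) :
    {c : Fin (N + 1) →₀ ℕ // c.degree = k} ≃ Sym (Fin (N + 1)) k where
  toFun c := ⟨Finsupp.toMultiset c.1, by
    rw [Finsupp.card_toMultiset, degree_eq_sum_id, c.2]⟩
  invFun s := ⟨Multiset.toFinsupp s.1, by
    rw [← degree_eq_sum_id, Multiset.toFinsupp_sum_eq, s.2]⟩
  left_inv c := by
    apply Subtype.ext
    simp
  right_inv s := by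
    apply Subtype.ext
    simp only
    rw [Multiset.toFinsupp_toMultiset]

lemma card_small_wt {N n k : ℕ} (hkn : k ≤ n) :
    Nat.card {d : Fin (N + 1) →₀ ℕ // d.degree = n ∧ wt d ≤ k} = (k + N).choose N := by
  classical
  rw [Nat.card_congr (equivUpdate hkn), Nat.card_congr (equivSym N k),
    Nat.card_eq_fintype_card, Sym.card_sym_eq_multichoose, Nat.multichoose_eq,
    Fintype.card_fin]
  have h1 : N + 1 + k - 1 = k + N := by omega
  rw [h1, ← Nat.choose_symm (show k ≤ k + N from Nat.le_add_right k N)]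
  have h2 : k + N - k = N := by omega
  rw [h2]

end Count

end Stmt9Aux

open Stmt9Aux in
theorem stmt_9 {F : Type*} [Field F] {N : ℕ} (hN : 1 ≤ N)
    (k n : ℕ) (hk : 1 ≤ k) (hkn : k < n) :
    Module.finrank F ↥(homogeneousSubmodule (Fin (N + 1)) F n) -
        Module.finrank F
          ↥(homogeneousSubmodule (Fin (N + 1)) F n ⊓
              Submodule.restrictScalars F ((mIdeal F N) ^ (k + 1))) =
      Nat.choose (k + N) N ∧
    Module.finrank F
        (↥(homogeneousSubmodule (Fin (N + 1)) F n) ⧸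
          (Submodule.restrictScalars F ((mIdeal F N) ^ (k + 1))).comap
            (homogeneousSubmodule (Fin (N + 1)) F n).subtype) =
      Nat.choose (k + N) N := by
  classical
  set S := homogeneousSubmodule (Fin (N + 1)) F n with hSdef
  set U := Submodule.restrictScalars F ((mIdeal F N) ^ (k + 1)) with hUdef
  set A : Set (Fin (N + 1) →₀ ℕ) := {d | d.degree = n} with hAdef
  set B : Set (Fin (N + 1) →₀ ℕ) := {d | d.degree = n ∧ k + 1 ≤ wt d} with hBdef
  have hAfin : A.Finite :=
    (Finsupp.finite_of_degree_le n).subset (fun d hd => le_of_eq hd)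
  have hBA : B ⊆ A := fun d hd => hd.1
  have hBfin : B.Finite := hAfin.subset hBA
  haveI fA : Fintype ↥A := hAfin.fintype
  haveI fB : Fintype ↥B := hBfin.fintype
  have hS : S = MvPolynomial.restrictSupport F A :=
    homogeneousSubmodule_eq_finsupp_supported (Fin (N + 1)) F n
  have hSU : S ⊓ U = MvPolynomial.restrictSupport F B := by
    ext p
    rw [Submodule.mem_inf, hS]
    show p ∈ MvPolynomial.restrictSupport F A ∧ _ ↔ p ∈ MvPolynomial.restrictSupport F B
    rw [MvPolynomial.mem_restrictSupport_iff, MvPolynomial.mem_restrictSupport_iff, hUdef,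
      Submodule.restrictScalars_mem, mem_pow_iff]
    constructor
    · rintro ⟨h1, h2⟩ d hd
      exact ⟨h1 hd, h2 d hd⟩
    · intro h
      exact ⟨fun d hd => (h hd).1, fun d hd => (h hd).2⟩
  have hadim : Module.finrank F ↥S = Fintype.card ↥A := by
    rw [hS]
    exact Module.finrank_eq_card_basis (MvPolynomial.basisRestrictSupport F A)
  have hbdim : Module.finrank F ↥(S ⊓ U) = Fintype.card ↥B := by
    rw [hSU]
    exact Module.finrank_eq_card_basis (MvPolynomial.basisRestrictSupport F B)
  haveI : FiniteDimensional F ↥S := by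
    rw [hS]
    exact Module.Finite.of_basis (MvPolynomial.basisRestrictSupport F A)
  -- cardinality computation
  have hdiff : A \ B = {d : Fin (N + 1) →₀ ℕ | d.degree = n ∧ wt d ≤ k} := by
    ext d
    simp only [Set.mem_diff, hAdef, hBdef, Set.mem_setOf_eq]
    constructor
    · rintro ⟨h1, h2⟩
      refine ⟨h1, ?_⟩
      by_contra hc
      exact h2 ⟨h1, by omega⟩
    · rintro ⟨h1, h2⟩
      exact ⟨h1, fun hc => by omega⟩
  have hABcard : (A \ B).ncard + B.ncard = A.ncard :=
    Set.ncard_diff_add_ncard_of_subset hBA hAfin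
  have hABdiff : (A \ B).ncard = (k + N).choose N := by
    rw [← Nat.card_coe_set_eq, hdiff]
    exact card_small_wt (le_of_lt hkn)
  have hcardA : Fintype.card ↥A = A.ncard := by
    rw [← Nat.card_coe_set_eq, Nat.card_eq_fintype_card]
  have hcardB : Fintype.card ↥B = B.ncard := by
    rw [← Nat.card_coe_set_eq, Nat.card_eq_fintype_card]
  -- quotient
  have hcomap : U.comap S.subtype = (S ⊓ U).comap S.subtype := by
    rw [Submodule.comap_inf, Submodule.comap_subtype_self, top_inf_eq]
  have hq : Module.finrank F ↥(U.comap S.subtype) = Fintype.card ↥B := by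
    rw [hcomap, LinearEquiv.finrank_eq (Submodule.comapSubtypeEquivOfLe inf_le_left), hbdim]
  have hsum := Submodule.finrank_quotient_add_finrank (U.comap S.subtype)
  rw [hq] at hsum
  rw [hadim] at hsum
  constructor
  · rw [hadim, hbdim, hcardA, hcardB]
    omega
  · rw [hcardA, hcardB] at hsum
    omega
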